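/- Let C ∈ ℝ^{m×n} and D ∈ ℝ^{p×n}, and let K := {d ∈ ℝⁿ : Cd ≤ 0, Dd = 0}. Then the polar cone K° := {y ∈ ℝⁿ : x·y ≤ 0 for all x ∈ K} equals {Cᵀλ + Dᵀρ : λ ∈ ℝᵐ, λ ≥ 0, ρ ∈ ℝᵖ}. -/

import Mathlib

open Matrix Finset
open scoped InnerProductSpace

section Cone

variable {ι : Type*} [Fintype ι] [DecidableEq ι]

/-- Conic Carathéodory: any nonnegative combination can be rewritten with
linearly independent support. -/
lemma cone_caratheodory_aux {V : Type*} [AddCommGroup V] [Module ℝ V] (v : ι → V) :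
    ∀ N : ℕ, ∀ c : ι → ℝ, (univ.filter fun i => c i ≠ 0).card ≤ N → (∀ i, 0 ≤ c i) →
      ∃ c' : ι → ℝ, (∀ i, 0 ≤ c' i) ∧ (∑ i, c' i • v i = ∑ i, c i • v i) ∧
        LinearIndependent ℝ (fun i : {i // c' i ≠ 0} => v (i : ι)) := by
  intro N
  induction N with
  | zero =>
    intro c hcard hc
    have hc0 : ∀ i, c i = 0 := by
      intro i
      by_contra h
      have hmem : i ∈ univ.filter fun i => c i ≠ 0 := by simp [h]
      have := Finset.card_pos.mpr ⟨i, hmem⟩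
      omega
    refine ⟨c, hc, rfl, ?_⟩
    have : IsEmpty {i // c i ≠ 0} := ⟨fun i => i.2 (hc0 i.1)⟩
    exact linearIndependent_empty_type
  | succ N ih =>
    intro c hcard hc
    by_cases h : LinearIndependent ℝ (fun i : {i // c i ≠ 0} => v (i : ι))
    · exact ⟨c, hc, rfl, h⟩
    rw [Fintype.linearIndependent_iff] at h
    push_neg at h
    obtain ⟨g, hgsum, j, hgj⟩ := h
    -- make sure some coefficient is positive
    obtain ⟨g, hgsum, hgj⟩ : ∃ g : {i // c i ≠ 0} → ℝ,
        (∑ i, g i • v (i : ι) = 0) ∧ 0 < g j := by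
      rcases lt_or_gt_of_ne hgj with hneg | hpos
      · refine ⟨-g, ?_, by simpa using hneg⟩
        simp only [Pi.neg_apply, neg_smul]
        simp [Finset.sum_neg_distrib, hgsum]
      · exact ⟨g, hgsum, hpos⟩
    classical
    set d : ι → ℝ := fun i => if h : c i ≠ 0 then g ⟨i, h⟩ else 0 with hd
    have hdsum : ∑ i, d i • v i = 0 := by
      rw [← hgsum]
      rw [← Finset.sum_subset (Finset.subset_univ (univ.filter fun i => c i ≠ 0))]
      · rw [← Finset.sum_coe_sort (univ.filter fun i => c i ≠ 0) (fun i => d i • v i)]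
        refine Finset.sum_equiv (Equiv.subtypeEquivRight ?_) (by simp) ?_
        · intro i; simp
        · rintro ⟨i, hi⟩ _
          simp only [Equiv.subtypeEquivRight_apply, hd]
          rw [dif_pos]
      · intro i _ hi
        simp only [mem_filter, mem_univ, true_and, not_not] at hi
        simp [hd, hi]
    have hdj : 0 < d j.1 := by
      have hdjeq : d j.1 = g j := by rw [hd]; exact dif_pos j.2
      rw [hdjeq]; exact hgj
    obtain ⟨i₀, hi₀mem, hi₀min⟩ :=
      Finset.exists_min_image (univ.filter fun i => 0 < d i) (fun i => c i / d i)
        ⟨j.1, by simp [hdj]⟩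
    simp only [mem_filter, mem_univ, true_and] at hi₀mem
    set t : ℝ := c i₀ / d i₀ with ht
    have ht0 : 0 ≤ t := div_nonneg (hc i₀) hi₀mem.le
    set c' : ι → ℝ := fun i => c i - t * d i with hc'def
    have hc' : ∀ i, 0 ≤ c' i := by
      intro i
      rcases le_or_gt (d i) 0 with hdi | hdi
      · have : t * d i ≤ 0 := mul_nonpos_of_nonneg_of_nonpos ht0 hdi
        simp only [hc'def]; linarith [hc i]
      · have := hi₀min i (by simp [hdi])
        rw [ht, div_le_div_iff₀ hi₀mem hdi] at this
        simp only [hc'def]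
        rw [sub_nonneg, ht, div_mul_eq_mul_div, div_le_iff₀ hi₀mem]
        linarith
    have hsum' : ∑ i, c' i • v i = ∑ i, c i • v i := by
      simp only [hc'def, sub_smul, mul_smul, Finset.sum_sub_distrib,
        ← Finset.smul_sum]
      rw [hdsum, smul_zero, sub_zero]
    have hci₀ : c i₀ ≠ 0 := by
      intro h0
      simp only [hd] at hi₀mem
      rw [dif_neg (by simp [h0])] at hi₀mem
      exact lt_irrefl 0 hi₀mem
    have hc'i₀ : c' i₀ = 0 := by
      simp only [hc'def, ht]
      field_simp
      ring
    have hsubset : (univ.filter fun i => c' i ≠ 0) ⊆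
        (univ.filter fun i => c i ≠ 0).erase i₀ := by
      intro i hi
      simp only [mem_filter, mem_univ, true_and] at hi
      rw [Finset.mem_erase]
      constructor
      · rintro rfl; exact hi hc'i₀
      · simp only [mem_filter, mem_univ, true_and]
        intro h0
        apply hi
        simp [hc'def, hd, h0, dif_neg]
    have hcard' : (univ.filter fun i => c' i ≠ 0).card ≤ N := by
      have h1 := Finset.card_le_card hsubset
      have h2 := Finset.card_erase_of_mem
        (by simp only [mem_filter, mem_univ, true_and]; exact hci₀ :
          i₀ ∈ univ.filter fun i => c i ≠ 0)
      omega
    obtain ⟨c'', h1, h2, h3⟩ := ih c' hcard' hc'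
    exact ⟨c'', h1, h2.trans hsum', h3⟩

lemma cone_caratheodory {V : Type*} [AddCommGroup V] [Module ℝ V] (v : ι → V)
    (c : ι → ℝ) (hc : ∀ i, 0 ≤ c i) :
    ∃ c' : ι → ℝ, (∀ i, 0 ≤ c' i) ∧ (∑ i, c' i • v i = ∑ i, c i • v i) ∧
      LinearIndependent ℝ (fun i : {i // c' i ≠ 0} => v (i : ι)) :=
  cone_caratheodory_aux v _ c le_rfl hc

end Cone

section Closed

open Topology

variable {ι : Type*} [Fintype ι] [DecidableEq ι]
variable {E : Type*} [NormedAddCommGroup E] [NormedSpace ℝ E] [FiniteDimensional ℝ E]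

lemma sum_subtype_eq_sum {V : Type*} [AddCommMonoid V] (s : Finset ι) (f : ι → V)
    (hf : ∀ i ∉ s, f i = 0) : ∑ i : s, f (i : ι) = ∑ i : ι, f i := by
  rw [Finset.sum_coe_sort s f]
  exact Finset.sum_subset (Finset.subset_univ _) fun i _ hi => hf i hi

lemma isClosed_cone_of_li (v : ι → E) (h : LinearIndependent ℝ v) :
    IsClosed ((fun c : ι → ℝ => ∑ i, c i • v i) '' {c | ∀ i, 0 ≤ c i}) := by
  let L : (ι → ℝ) →ₗ[ℝ] E :=
    { toFun := fun c => ∑ i, c i • v i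
      map_add' := fun c₁ c₂ => by simp [add_smul, Finset.sum_add_distrib]
      map_smul' := fun r c => by
        simp [mul_smul, Finset.smul_sum] }
  have hker : LinearMap.ker L = ⊥ := by
    rw [LinearMap.ker_eq_bot']
    intro c hc
    rw [Fintype.linearIndependent_iff] at h
    funext i
    exact h c hc i
  have hemb : IsClosedEmbedding L := LinearMap.isClosedEmbedding_of_injective hker
  have hcl : IsClosed {c : ι → ℝ | ∀ i, 0 ≤ c i} := by
    have : {c : ι → ℝ | ∀ i, 0 ≤ c i} = ⋂ i, (fun c : ι → ℝ => c i) ⁻¹' Set.Ici 0 := by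
      ext c; simp [Set.mem_iInter]
    rw [this]
    exact isClosed_iInter fun i => (isClosed_Ici).preimage (continuous_apply i)
  exact hemb.isClosedMap _ hcl

lemma isClosed_cone (v : ι → E) :
    IsClosed {x : E | ∃ c : ι → ℝ, (∀ i, 0 ≤ c i) ∧ x = ∑ i, c i • v i} := by
  have key : {x : E | ∃ c : ι → ℝ, (∀ i, 0 ≤ c i) ∧ x = ∑ i, c i • v i} =
      ⋃ s ∈ {s : Finset ι | LinearIndependent ℝ (fun i : s => v (i : ι))},
        (fun c : s → ℝ => ∑ i, c i • v (i : ι)) '' {c | ∀ i, 0 ≤ c i} := by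
    ext x
    simp only [Set.mem_setOf_eq, Set.mem_iUnion, Set.mem_image, exists_prop]
    constructor
    · rintro ⟨c, hc, rfl⟩
      obtain ⟨c', hc', hsum, hli⟩ := cone_caratheodory v c hc
      set s : Finset ι := univ.filter fun i => c' i ≠ 0 with hs
      let e : (s : Finset ι) ≃ {i : ι // c' i ≠ 0} :=
        Equiv.subtypeEquivRight (fun i => by simp [hs])
      refine ⟨s, ?_, fun i => c' (i : ι), fun i => hc' _, ?_⟩
      · have hcomp : ((fun i : {i // c' i ≠ 0} => v (i : ι)) ∘ e) =
            fun i : s => v (i : ι) := by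
          funext i
          rfl
        exact hcomp ▸ hli.comp e e.injective
      · rw [← hsum]
        exact sum_subtype_eq_sum s (fun i => c' i • v i)
          (fun i hi => by
            simp only [hs, mem_filter, mem_univ, true_and, not_not] at hi
            simp [hi])
    · rintro ⟨s, hs, c, hc, rfl⟩
      classical
      refine ⟨fun i => if h : i ∈ s then c ⟨i, h⟩ else 0, ?_, ?_⟩
      · intro i
        dsimp only
        by_cases h : i ∈ s
        · rw [dif_pos h]; exact hc _
        · rw [dif_neg h]
      · rw [← sum_subtype_eq_sum s
          (fun i => (if h : i ∈ s then c ⟨i, h⟩ else 0) • v i)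
          (fun i hi => by rw [dif_neg hi, zero_smul])]
        refine Finset.sum_congr rfl fun i _ => ?_
        rw [dif_pos i.2]
  rw [key]
  exact Set.Finite.isClosed_biUnion (Set.toFinite _) fun s hs => isClosed_cone_of_li _ hs

end Closed

lemma transpose_mulVec_eq_sum {m n : ℕ} (C : Matrix (Fin m) (Fin n) ℝ) (lam : Fin m → ℝ) :
    Cᵀ.mulVec lam = ∑ i, lam i • C i := by
  funext j
  simp [Matrix.mulVec, dotProduct, Finset.sum_apply, mul_comm]



theorem polar_of_polyhedral_cone {m p n : ℕ}
    (C : Matrix (Fin m) (Fin n) ℝ) (D : Matrix (Fin p) (Fin n) ℝ) :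
    {y : Fin n → ℝ | ∀ x ∈ {d : Fin n → ℝ | (∀ i, C.mulVec d i ≤ 0) ∧ D.mulVec d = 0},
        x ⬝ᵥ y ≤ 0} =
    {y : Fin n → ℝ | ∃ (lam : Fin m → ℝ) (rho : Fin p → ℝ), (∀ i, 0 ≤ lam i) ∧
        y = Cᵀ.mulVec lam + Dᵀ.mulVec rho} := by
  classical
  ext y
  simp only [Set.mem_setOf_eq]
  constructor
  · -- hard direction
    intro hy
    -- generators of the dual cone
    set w : (Fin m ⊕ (Fin p ⊕ Fin p)) → EuclideanSpace ℝ (Fin n) :=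
      Sum.elim (fun i => WithLp.toLp 2 (C i)) (Sum.elim (fun j => WithLp.toLp 2 (D j)) (fun j => WithLp.toLp 2 (-(D j)))) with hw
    -- the ConvexCone generated by w
    let S : ConvexCone ℝ (EuclideanSpace ℝ (Fin n)) :=
      { carrier := {x | ∃ c : (Fin m ⊕ (Fin p ⊕ Fin p)) → ℝ, (∀ i, 0 ≤ c i) ∧ x = ∑ i, c i • w i}
        smul_mem' := by
          rintro r hr x ⟨c, hc, rfl⟩
          refine ⟨r • c, fun i => mul_nonneg hr.le (hc i), ?_⟩
          rw [Finset.smul_sum]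
          exact Finset.sum_congr rfl fun i _ => by
            rw [Pi.smul_apply, smul_eq_mul, mul_smul]
        add_mem' := by
          rintro x ⟨c, hc, rfl⟩ x' ⟨c', hc', rfl⟩
          refine ⟨c + c', fun i => add_nonneg (hc i) (hc' i), ?_⟩
          rw [← Finset.sum_add_distrib]
          exact Finset.sum_congr rfl fun i _ => by
            rw [Pi.add_apply, add_smul] }
    have hSmem : ∀ x : EuclideanSpace ℝ (Fin n), x ∈ S ↔
        ∃ c : (Fin m ⊕ (Fin p ⊕ Fin p)) → ℝ, (∀ i, 0 ≤ c i) ∧ x = ∑ i, c i • w i := fun _ => Iff.rfl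
    have hSne : (S : Set (EuclideanSpace ℝ (Fin n))).Nonempty :=
      ⟨0, 0, fun i => le_rfl, by simp⟩
    have hScl : IsClosed (S : Set (EuclideanSpace ℝ (Fin n))) := isClosed_cone w
    -- y belongs to S
    by_contra hny
    have hyS : (WithLp.toLp 2 y : EuclideanSpace ℝ (Fin n)) ∉ S := by
      intro hyS
      obtain ⟨c, hc, hyc⟩ := (hSmem _).1 hyS
      apply hny
      refine ⟨fun i => c (Sum.inl i),
        fun j => c (Sum.inr (Sum.inl j)) - c (Sum.inr (Sum.inr j)),
        fun i => hc _, ?_⟩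
      have : (WithLp.ofLp (∑ i, c i • w i : EuclideanSpace ℝ (Fin n)) : Fin n → ℝ) =
          Cᵀ.mulVec (fun i => c (Sum.inl i)) +
          Dᵀ.mulVec (fun j => c (Sum.inr (Sum.inl j)) - c (Sum.inr (Sum.inr j))) := by
        rw [transpose_mulVec_eq_sum, transpose_mulVec_eq_sum, Fintype.sum_sum_type,
          Fintype.sum_sum_type]
        simp only [WithLp.ofLp_sum, WithLp.ofLp_add, WithLp.ofLp_smul, WithLp.ofLp_toLp,
          hw, Sum.elim_inl, Sum.elim_inr, sub_smul, smul_neg,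
          Finset.sum_sub_distrib, Finset.sum_neg_distrib]
        module
      rw [← WithLp.ofLp_toLp 2 y, hyc, this]
    obtain ⟨z, hz1, hz2⟩ :=
      ProperCone.hyperplane_separation' (⟨S.toPointedCone (.of_nonempty_of_isClosed hSne hScl), hScl⟩ : ProperCone ℝ (EuclideanSpace ℝ (Fin n))) hyS
    have hinner : ∀ a b : EuclideanSpace ℝ (Fin n), ⟪a, b⟫_ℝ = WithLp.ofLp a ⬝ᵥ WithLp.ofLp b := by
      intro a b
      simp [PiLp.inner_apply, dotProduct, RCLike.inner_apply, mul_comm]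
    have hgen : ∀ a, w a ∈ S := by
      intro a
      refine (hSmem _).2 ⟨Pi.single a 1, fun k => ?_, ?_⟩
      · by_cases h : k = a
        · subst h; simp
        · simp [Pi.single_eq_of_ne h]
      · rw [Finset.sum_eq_single_of_mem a (mem_univ a)]
        · rw [Pi.single_eq_same, one_smul]
        · intro b _ hb
          rw [Pi.single_eq_of_ne hb, zero_smul]
    have hCz : ∀ i, 0 ≤ C.mulVec (WithLp.ofLp z) i := by
      intro i
      have := hz1 _ (hgen (Sum.inl i))
      rw [hinner] at this
      simpa [hw, Matrix.mulVec, dotProduct] using this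
    have hDz : D.mulVec (WithLp.ofLp z) = 0 := by
      funext j
      have h1 := hz1 _ (hgen (Sum.inr (Sum.inl j)))
      have h2 := hz1 _ (hgen (Sum.inr (Sum.inr j)))
      rw [hinner] at h1 h2
      simp only [hw, Sum.elim_inr, Sum.elim_inl, WithLp.ofLp_toLp, neg_dotProduct] at h1 h2
      have : (D j) ⬝ᵥ WithLp.ofLp z = 0 := le_antisymm (by linarith) h1
      simpa [Matrix.mulVec, dotProduct] using this
    have hdK : (-(WithLp.ofLp z) : Fin n → ℝ) ∈ {d : Fin n → ℝ | (∀ i, C.mulVec d i ≤ 0) ∧ D.mulVec d = 0} := by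
      constructor
      · intro i
        rw [Matrix.mulVec_neg]
        simpa using hCz i
      · rw [Matrix.mulVec_neg, hDz, neg_zero]
    have := hy _ hdK
    rw [neg_dotProduct] at this
    rw [hinner] at hz2
    have hzy : WithLp.ofLp z ⬝ᵥ y < 0 := by rw [dotProduct_comm]; exact hz2
    linarith
  · -- easy direction
    rintro ⟨lam, rho, hlam, rfl⟩ x ⟨hx1, hx2⟩
    rw [dotProduct_add, Matrix.dotProduct_mulVec, Matrix.dotProduct_mulVec,
      Matrix.vecMul_transpose, Matrix.vecMul_transpose, hx2]
    rw [zero_dotProduct, add_zero]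
    refine Finset.sum_nonpos fun i _ => ?_
    exact mul_nonpos_of_nonpos_of_nonneg (hx1 i) (hlam i)
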